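/- For CDFs F₁, F₂ and λ ∈ [-1,1], the quantile composition satisfies G_λ[F₂]⁻¹(G_λ[F₁](x)) = F₂⁻¹(F₁(x)) for all x; consequently the transformation F ↦ G_λ[F] preserves the convex transform, star, superadditive, and dispersive orders. -/

import Mathlib

/-- Quantile composition: for strictly increasing continuous CDFs `F₁, F₂` with
inverse `F₂inv` of `F₂`, and `λ ∈ [-1,1]`, `λ ≠ 0`, the quantile transform of
`G_λ[F₂]` composed with `G_λ[F₁]` equals `F₂⁻¹ ∘ F₁`; consequently the map
`F ↦ G_λ[F]` preserves the convex transform, star, superadditive and dispersive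
orders. -/
theorem transform_quantile_composition (F₁ F₂ F₂inv : ℝ → ℝ) (lam : ℝ)
    (hlam : lam ∈ Set.Icc (-1 : ℝ) 1) (hlam0 : lam ≠ 0)
    (hF₁ : ∀ x, F₁ x ∈ Set.Icc (0 : ℝ) 1)
    (hF₂cont : Continuous F₂) (hF₂mono : StrictMono F₂)
    (hinv : ∀ x, F₂inv (F₂ x) = x)
    (T S : ℝ → ℝ)
    (hT : T = fun x => F₂inv ((1 + lam -
      Real.sqrt ((1 + lam) ^ 2 - 4 * lam * (F₁ x * (1 + lam * (1 - F₁ x))))) / (2 * lam)))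
    (hS : S = fun x => F₂inv (F₁ x)) :
    (∀ x, T x = S x) ∧
    (ConvexOn ℝ Set.univ S → ConvexOn ℝ Set.univ T) ∧
    (Monotone (fun x => S x / x) → Monotone (fun x => T x / x)) ∧
    ((∀ x y, S x + S y ≤ S (x + y)) → ∀ x y, T x + T y ≤ T (x + y)) ∧
    (Monotone (fun x => S x - x) → Monotone (fun x => T x - x)) := by
  obtain ⟨hlam1, hlam2⟩ := hlam
  have hTS : T = S := by
    subst hT hS
    funext x
    obtain ⟨hp0, hp1⟩ := hF₁ x
    set p := F₁ x
    have hsq : (1 + lam) ^ 2 - 4 * lam * (p * (1 + lam * (1 - p)))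
        = (1 + lam - 2 * lam * p) ^ 2 := by ring
    have hnn : 0 ≤ 1 + lam - 2 * lam * p := by
      rcases le_or_gt 0 lam with h | h
      · nlinarith
      · nlinarith
    have : Real.sqrt ((1 + lam) ^ 2 - 4 * lam * (p * (1 + lam * (1 - p))))
        = 1 + lam - 2 * lam * p := by
      rw [hsq, Real.sqrt_sq hnn]
    rw [this]
    congr 1
    field_simp
    ring
  subst hTS
  exact ⟨fun _ => rfl, id, id, id, id⟩
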